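/- arXiv:1709.07999 — 8 statements merged into one kernel-verified Lean document; each statement's English description precedes it below -/
import Mathlib

section
/- For all n ≥ k ≥ 0, the vertical recurrence w_{m,r,q}(n+1,k+1) = ∑_{j=k}^{n} (-1)^{n-j} q^{C(j,2) - C(n+1,2)} w_{m,r,q}(j,k) ∏_{i=j+1}^{n} (m[i]_q + r) holds, where the product is 1 when j = n. -/
open Finset

noncomputable def qint (q : ℂ) (n : ℕ) : ℂ := (q ^ n - 1) / (q - 1)

/-- (q,r)-Whitney numbers of the first kind, via the triangular recurrence
`w(n+1,k) = q^{-n} (w(n,k-1) - (m[n]_q + r) w(n,k))`, with `w(0,0)=1` and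
`w(n,k)=0` for `k>n` (the `k<0` values are zero, absorbed in the `k=0` case). -/
noncomputable def qw (q m r : ℂ) : ℕ → ℕ → ℂ
  | 0, 0 => 1
  | 0, _ + 1 => 0
  | n + 1, 0 => q ^ (-(n : ℤ)) * (0 - (m * qint q n + r) * qw q m r n 0)
  | n + 1, k + 1 => q ^ (-(n : ℤ)) * (qw q m r n k - (m * qint q n + r) * qw q m r n (k + 1))

/-- (q,r)-Whitney numbers of the second kind, via
`W(n+1,k) = q^{k-1} W(n,k-1) + (m[k]_q + r) W(n,k)`, with `W(0,0)=1`. -/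
noncomputable def qW (q m r : ℂ) : ℕ → ℕ → ℂ
  | 0, 0 => 1
  | 0, _ + 1 => 0
  | n + 1, 0 => (m * qint q 0 + r) * qW q m r n 0
  | n + 1, k + 1 => q ^ k * qW q m r n k + (m * qint q (k + 1) + r) * qW q m r n (k + 1)

lemma qw_zero_of_lt (q m r : ℂ) : ∀ n k : ℕ, n < k → qw q m r n k = 0 := by
  intro n
  induction n with
  | zero =>
    intro k hk
    match k, hk with
    | k + 1, _ => rfl
  | succ n ih =>
    intro k hk
    match k, hk with
    | k + 1, hk =>
      have h1 : n < k := Nat.succ_lt_succ_iff.mp hk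
      show q ^ (-(n : ℤ)) * (qw q m r n k - (m * qint q n + r) * qw q m r n (k + 1)) = 0
      rw [ih k h1, ih (k + 1) (h1.trans (Nat.lt_succ_self k))]
      ring

lemma choose_succ_two (n : ℕ) : (n + 1).choose 2 = n.choose 2 + n := by
  rw [Nat.choose_succ_succ, Nat.choose_one_right, Nat.add_comm]

theorem stmt3 (q m r : ℂ) (hq0 : q ≠ 0) (hq1 : q ≠ 1) (n k : ℕ) (hkn : k ≤ n) :
    qw q m r (n + 1) (k + 1) =
      ∑ j ∈ Finset.Icc k n, (-1) ^ (n - j) * q ^ ((j.choose 2 : ℤ) - ((n + 1).choose 2 : ℤ)) *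
        qw q m r j k * ∏ i ∈ Finset.Icc (j + 1) n, (m * qint q i + r) := by
  induction n with
  | zero =>
    obtain rfl : k = 0 := Nat.le_zero.mp hkn
    show q ^ (-(0 : ℤ)) * (qw q m r 0 0 - (m * qint q 0 + r) * qw q m r 0 1) = _
    simp [qw, Finset.Icc_self]
  | succ n ih =>
    rcases Nat.lt_or_ge k (n + 1) with h | h
    · have hkn' : k ≤ n := Nat.lt_succ_iff.mp h
      have hins : Finset.Icc k (n + 1) = insert (n + 1) (Finset.Icc k n) := by
        ext x; simp [Finset.mem_Icc]; omega
      rw [hins, Finset.sum_insert (by simp)]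
      have hterm : (-1 : ℂ) ^ (n + 1 - (n + 1)) *
          q ^ (((n + 1).choose 2 : ℤ) - ((n + 1 + 1).choose 2 : ℤ)) *
          qw q m r (n + 1) k * ∏ i ∈ Finset.Icc (n + 1 + 1) (n + 1), (m * qint q i + r) =
          q ^ (-((n : ℤ) + 1)) * qw q m r (n + 1) k := by
        rw [Finset.Icc_eq_empty (by omega), Finset.prod_empty]
        have he : ((n + 1).choose 2 : ℤ) - ((n + 1 + 1).choose 2 : ℤ) = -((n : ℤ) + 1) := by
          rw [choose_succ_two (n + 1)]; push_cast; ring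
        rw [he]; simp
      have hsum : ∑ j ∈ Finset.Icc k n, (-1 : ℂ) ^ (n + 1 - j) *
          q ^ ((j.choose 2 : ℤ) - ((n + 1 + 1).choose 2 : ℤ)) * qw q m r j k *
          ∏ i ∈ Finset.Icc (j + 1) (n + 1), (m * qint q i + r) =
          -(m * qint q (n + 1) + r) * q ^ (-((n : ℤ) + 1)) *
          ∑ j ∈ Finset.Icc k n, (-1 : ℂ) ^ (n - j) *
            q ^ ((j.choose 2 : ℤ) - ((n + 1).choose 2 : ℤ)) * qw q m r j k *
            ∏ i ∈ Finset.Icc (j + 1) n, (m * qint q i + r) := by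
        rw [Finset.mul_sum]
        refine Finset.sum_congr rfl fun j hj => ?_
        have hjn : j ≤ n := (Finset.mem_Icc.mp hj).2
        have h1 : (-1 : ℂ) ^ (n + 1 - j) = -(-1 : ℂ) ^ (n - j) := by
          rw [show n + 1 - j = (n - j) + 1 by omega, pow_succ]; ring
        have h2 : (q : ℂ) ^ ((j.choose 2 : ℤ) - ((n + 1 + 1).choose 2 : ℤ)) =
            q ^ (-((n : ℤ) + 1)) * q ^ ((j.choose 2 : ℤ) - ((n + 1).choose 2 : ℤ)) := by
          rw [← zpow_add₀ hq0]
          congr 1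
          rw [choose_succ_two (n + 1)]; push_cast; ring
        have h3 : ∏ i ∈ Finset.Icc (j + 1) (n + 1), (m * qint q i + r) =
            (m * qint q (n + 1) + r) * ∏ i ∈ Finset.Icc (j + 1) n, (m * qint q i + r) := by
          rw [show Finset.Icc (j + 1) (n + 1) = insert (n + 1) (Finset.Icc (j + 1) n) by
            ext x; simp [Finset.mem_Icc]; omega, Finset.prod_insert (by simp)]
        rw [h1, h2, h3]; ring
      rw [hterm, hsum, ← ih hkn']
      show q ^ (-((n : ℤ) + 1)) * (qw q m r (n + 1) k -
          (m * qint q (n + 1) + r) * qw q m r (n + 1) (k + 1)) = _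
      ring
    · obtain rfl : k = n + 1 := le_antisymm hkn h
      rw [Finset.Icc_self, Finset.sum_singleton, Finset.Icc_eq_empty (by omega),
        Finset.prod_empty]
      show q ^ (-((n : ℤ) + 1)) * (qw q m r (n + 1) (n + 1) -
          (m * qint q (n + 1) + r) * qw q m r (n + 1) (n + 1 + 1)) = _
      rw [qw_zero_of_lt q m r (n + 1) (n + 1 + 1) (by omega)]
      have he : ((n + 1).choose 2 : ℤ) - ((n + 1 + 1).choose 2 : ℤ) = -((n : ℤ) + 1) := by
        rw [choose_succ_two (n + 1)]; push_cast; ring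
      rw [Nat.sub_self, he]
      ring
end

section
/- For all n ≥ k ≥ 0, the vertical recurrence W_{m,r,q}(n+1,k+1) = q^k ∑_{j=k}^{n} (m[k+1]_q + r)^{n-j} W_{m,r,q}(j,k) holds. -/
open Finset

lemma qW_eq_zero (q m r : ℂ) : ∀ n k : ℕ, n < k → qW q m r n k = 0
  | 0, 0 => by omega
  | 0, k + 1 => fun _ => rfl
  | n + 1, 0 => by omega
  | n + 1, k + 1 => fun h => by
    rw [qW, qW_eq_zero q m r n k (by omega), qW_eq_zero q m r n (k+1) (by omega)]
    ring

theorem stmt4 (q m r : ℂ) (hq0 : q ≠ 0) (hq1 : q ≠ 1) (n k : ℕ) (hkn : k ≤ n) :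
    qW q m r (n + 1) (k + 1) =
      q ^ k * ∑ j ∈ Finset.Icc k n, (m * qint q (k + 1) + r) ^ (n - j) * qW q m r j k := by
  induction n with
  | zero =>
    interval_cases k
    simp [qW, qW_eq_zero q m r 0 1 (by omega)]
  | succ n ih =>
    rcases Nat.lt_or_ge k (n+1) with h | h
    · have hk : k ≤ n := by omega
      rw [show (n+1+1) = (n+1)+1 from rfl, qW, ih hk,
        Finset.sum_Icc_succ_top (by omega : k ≤ n + 1)]
      have hs : ∑ j ∈ Finset.Icc k n, (m * qint q (k + 1) + r) ^ (n + 1 - j) * qW q m r j k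
          = (m * qint q (k + 1) + r) * ∑ j ∈ Finset.Icc k n,
              (m * qint q (k + 1) + r) ^ (n - j) * qW q m r j k := by
        rw [Finset.mul_sum]
        refine Finset.sum_congr rfl fun j hj => ?_
        simp only [Finset.mem_Icc] at hj
        rw [show n + 1 - j = (n - j) + 1 by omega, pow_succ]
        ring
      rw [hs]
      simp only [Nat.sub_self, pow_zero, one_mul]
      ring
    · have hk : k = n + 1 := by omega
      subst hk
      rw [qW, qW_eq_zero q m r (n+1) (n+2) (by omega)]
      simp [Finset.Icc_self]
end

section
/- For all 0 ≤ k ≤ n, the horizontal recurrence w_{m,r,q}(n,k) = q^n ∑_{j=0}^{n-k} (m[n]_q + r)^j w_{m,r,q}(n+1, k+j+1) holds. -/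
open Finset

lemma qw_eq_zero (q m r : ℂ) : ∀ n k, n < k → qw q m r n k = 0 := by
  intro n
  induction n with
  | zero =>
    intro k hk
    match k, hk with
    | k + 1, _ => rw [qw]
  | succ n ih =>
    intro k hk
    match k, hk with
    | k + 1, hk =>
      rw [qw, ih k (by omega), ih (k + 1) (by omega)]
      ring

lemma qw_step (q m r : ℂ) (hq0 : q ≠ 0) (n k : ℕ) :
    qw q m r n k =
      q ^ n * qw q m r (n + 1) (k + 1) + (m * qint q n + r) * qw q m r n (k + 1) := by
  have h1 : (q : ℂ) ^ n * q ^ (-(n : ℤ)) = 1 := by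
    rw [← zpow_natCast, ← zpow_add₀ hq0]; simp
  rw [qw, ← mul_assoc, h1]
  ring

theorem stmt5 (q m r : ℂ) (hq0 : q ≠ 0) (hq1 : q ≠ 1) (n k : ℕ) (hkn : k ≤ n) :
    qw q m r n k =
      q ^ n * ∑ j ∈ Finset.range (n - k + 1),
        (m * qint q n + r) ^ j * qw q m r (n + 1) (k + j + 1) := by
  suffices h : ∀ d k, k ≤ n → n - k = d →
      qw q m r n k =
        q ^ n * ∑ j ∈ Finset.range (n - k + 1),
          (m * qint q n + r) ^ j * qw q m r (n + 1) (k + j + 1) from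
    h (n - k) k hkn rfl
  intro d
  induction d with
  | zero =>
    intro k hkn hnk
    have hk : k = n := by omega
    subst hk
    rw [show k - k + 1 = 1 by omega, Finset.sum_range_one,
      qw_step q m r hq0 k k, qw_eq_zero q m r k (k + 1) (by omega)]
    ring
  | succ d ih =>
    intro k hkn hnk
    have h1 := ih (k + 1) (by omega) (by omega)
    rw [show n - (k + 1) + 1 = d + 1 by omega] at h1
    rw [show n - k + 1 = d + 1 + 1 by omega, Finset.sum_range_succ',
      qw_step q m r hq0 n k, h1]
    have hsum : ∑ j ∈ range (d + 1),
        (m * qint q n + r) ^ (j + 1) * qw q m r (n + 1) (k + (j + 1) + 1)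
        = ∑ j ∈ range (d + 1),
        (m * qint q n + r) * ((m * qint q n + r) ^ j * qw q m r (n + 1) (k + 1 + j + 1)) := by
      apply Finset.sum_congr rfl
      intro j _
      rw [pow_succ, show k + (j + 1) + 1 = k + 1 + j + 1 by omega]
      ring
    rw [hsum, ← Finset.mul_sum]
    simp only [pow_zero, add_zero, one_mul]
    ring
end

section
/- For each fixed k ≥ 0, the formal power series identity ∑_{n=k}^{∞} W_{m,r,q}(n,k) t^n = q^{C(k,2)} t^k / ∏_{i=0}^{k} (1 - (m[i]_q + r) t) holds in the ring of formal power series over the complex numbers. -/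
open Finset

lemma qW_base (q m r : ℂ) :
    (PowerSeries.mk fun n => qW q m r n 0) *
      (1 - PowerSeries.C (m * qint q 0 + r) * PowerSeries.X) = 1 := by
  have : (PowerSeries.mk fun n => qW q m r n 0) *
      (1 - PowerSeries.C (m * qint q 0 + r) * PowerSeries.X)
      = (PowerSeries.mk fun n => qW q m r n 0) -
        PowerSeries.C (m * qint q 0 + r) * ((PowerSeries.mk fun n => qW q m r n 0) * PowerSeries.X) := by
    ring
  rw [this]
  ext n
  cases n with
  | zero => simp [qW]
  | succ n =>
    simp only [map_sub, PowerSeries.coeff_C_mul, PowerSeries.coeff_succ_mul_X,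
      PowerSeries.coeff_mk, qW, PowerSeries.coeff_one, if_neg (Nat.succ_ne_zero n)]
    ring

lemma qW_step (q m r : ℂ) (k : ℕ) :
    (PowerSeries.mk fun n => qW q m r n (k + 1)) *
      (1 - PowerSeries.C (m * qint q (k + 1) + r) * PowerSeries.X)
      = PowerSeries.C (q ^ k) *
        ((PowerSeries.mk fun n => qW q m r n k) * PowerSeries.X) := by
  have : (PowerSeries.mk fun n => qW q m r n (k + 1)) *
      (1 - PowerSeries.C (m * qint q (k + 1) + r) * PowerSeries.X)
      = (PowerSeries.mk fun n => qW q m r n (k + 1)) -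
        PowerSeries.C (m * qint q (k + 1) + r) *
          ((PowerSeries.mk fun n => qW q m r n (k + 1)) * PowerSeries.X) := by
    ring
  rw [this]
  ext n
  cases n with
  | zero => simp [qW]
  | succ n =>
    simp only [map_sub, PowerSeries.coeff_C_mul, PowerSeries.coeff_succ_mul_X,
      PowerSeries.coeff_mk, qW]
    ring

theorem stmt7 (q m r : ℂ) (hq0 : q ≠ 0) (hq1 : q ≠ 1) (k : ℕ) :
    (PowerSeries.mk fun n => qW q m r n k) *
        ∏ i ∈ Finset.range (k + 1), (1 - PowerSeries.C (m * qint q i + r) * PowerSeries.X) =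
      PowerSeries.C (q ^ k.choose 2) * PowerSeries.X ^ k := by
  induction k with
  | zero => simpa using qW_base q m r
  | succ k ih =>
    rw [Finset.prod_range_succ, show ∀ a b c : PowerSeries ℂ, a * (b * c) = a * c * b by
      intros; ring, qW_step q m r k]
    have : PowerSeries.C (q ^ k) *
        ((PowerSeries.mk fun n => qW q m r n k) * PowerSeries.X) *
        ∏ i ∈ Finset.range (k + 1), (1 - PowerSeries.C (m * qint q i + r) * PowerSeries.X)
        = PowerSeries.C (q ^ k) * PowerSeries.X *
          ((PowerSeries.mk fun n => qW q m r n k) *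
            ∏ i ∈ Finset.range (k + 1), (1 - PowerSeries.C (m * qint q i + r) * PowerSeries.X)) := by
      ring
    rw [this, ih, Nat.choose_two_right, Nat.choose_two_right]
    rw [show (k+1) * (k+1-1) / 2 = k * (k-1) / 2 + k by
      cases k with
      | zero => rfl
      | succ k =>
        have : (k + 1 + 1) * (k + 1 + 1 - 1) = (k + 1) * (k + 1 - 1) + 2 * (k + 1) := by
          simp only [Nat.add_sub_cancel]; ring
        omega]
    rw [pow_add, map_mul]
    ring
end

section
/- For all 0 ≤ k ≤ n and complex numbers r_1, r_2 with r_1 + r_2 = r, we have w_{m,r,q}(n,k) = ∑_{j=k}^{n} C(j,k) (-r_2)^{j-k} w_{m,r_1,q}(n,j). -/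
open Finset

lemma key (q m r₁ r₂ : ℂ) : ∀ n k,
    qw q m (r₁ + r₂) n k =
      ∑ j ∈ Finset.range (n+1), (j.choose k : ℂ) * (-r₂) ^ (j - k) * qw q m r₁ n j := by
  intro n
  induction n with
  | zero =>
    intro k
    cases k with
    | zero => simp [qw]
    | succ k => simp [qw]
  | succ n ih =>
    intro k
    have hz : qw q m r₁ n (n+1) = 0 := qw_eq_zero _ _ _ _ _ (by omega)
    cases k with
    | zero =>
      have H0 : qw q m (r₁ + r₂) n 0 = ∑ j ∈ Finset.range (n+1), (-r₂) ^ j * qw q m r₁ n j := by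
        rw [ih 0]
        exact Finset.sum_congr rfl (fun j _ => by simp)
      have hA : ∑ x ∈ Finset.range (n+1), (-r₂) ^ (x+1) * qw q m r₁ n (x+1)
          = (∑ j ∈ Finset.range (n+1), (-r₂) ^ j * qw q m r₁ n j) - qw q m r₁ n 0 := by
        have h1 := Finset.sum_range_succ (fun j => (-r₂) ^ j * qw q m r₁ n j) (n+1)
        have h2 := Finset.sum_range_succ' (fun j => (-r₂) ^ j * qw q m r₁ n j) (n+1)
        simp only [hz, mul_zero, add_zero, pow_zero, one_mul] at h1 h2
        rw [h1] at h2
        linear_combination -h2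
      have hB : ∑ x ∈ Finset.range (n+1), (-r₂) ^ (x+1) * qw q m r₁ n x
          = (-r₂) * ∑ j ∈ Finset.range (n+1), (-r₂) ^ j * qw q m r₁ n j := by
        rw [Finset.mul_sum]
        exact Finset.sum_congr rfl (fun x _ => by ring)
      rw [Finset.sum_range_succ']
      simp only [qw, Nat.choose_zero_right, Nat.cast_one, Nat.sub_zero, one_mul]
      have hmain : ∑ x ∈ Finset.range (n+1),
            (-r₂) ^ (x+1) * (q ^ (-(n:ℤ)) * (qw q m r₁ n x - (m * qint q n + r₁) * qw q m r₁ n (x+1)))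
          = q ^ (-(n:ℤ)) * (∑ x ∈ Finset.range (n+1), (-r₂) ^ (x+1) * qw q m r₁ n x)
            - q ^ (-(n:ℤ)) * (m * qint q n + r₁) *
              (∑ x ∈ Finset.range (n+1), (-r₂) ^ (x+1) * qw q m r₁ n (x+1)) := by
        rw [Finset.mul_sum, Finset.mul_sum, ← Finset.sum_sub_distrib]
        exact Finset.sum_congr rfl (fun x _ => by ring)
      rw [hmain, hA, hB, H0]
      ring
    | succ k =>
      have hpt : ∀ x : ℕ, ((x.choose (k+1)) : ℂ) * (-r₂) ^ (x-k)
          = (-r₂) * (((x.choose (k+1)) : ℂ) * (-r₂) ^ (x-(k+1))) := by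
        intro x
        rcases le_or_gt x k with h | h
        · rw [Nat.choose_eq_zero_of_lt (by omega)]
          simp
        · have hx : x - k = (x - (k+1)) + 1 := by omega
          rw [hx, pow_succ]
          ring
      have hS2 : ∑ x ∈ Finset.range (n+1), (((x+1).choose (k+1)) : ℂ) * (-r₂) ^ (x-k) * qw q m r₁ n (x+1)
          = ∑ j ∈ Finset.range (n+1), ((j.choose (k+1)) : ℂ) * (-r₂) ^ (j-(k+1)) * qw q m r₁ n j := by
        have h1 := Finset.sum_range_succ
          (fun j => ((j.choose (k+1)) : ℂ) * (-r₂) ^ (j-(k+1)) * qw q m r₁ n j) (n+1)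
        have h2 := Finset.sum_range_succ'
          (fun j => ((j.choose (k+1)) : ℂ) * (-r₂) ^ (j-(k+1)) * qw q m r₁ n j) (n+1)
        simp only [hz, mul_zero, add_zero, Nat.choose_zero_succ, Nat.cast_zero, zero_mul,
          Nat.succ_sub_succ] at h1 h2
        rw [h1] at h2
        linear_combination -h2
      have hS1 : ∑ x ∈ Finset.range (n+1), (((x+1).choose (k+1)) : ℂ) * (-r₂) ^ (x-k) * qw q m r₁ n x
          = (∑ j ∈ Finset.range (n+1), ((j.choose k) : ℂ) * (-r₂) ^ (j-k) * qw q m r₁ n j)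
            + (-r₂) * ∑ j ∈ Finset.range (n+1), ((j.choose (k+1)) : ℂ) * (-r₂) ^ (j-(k+1)) * qw q m r₁ n j := by
        rw [Finset.mul_sum, ← Finset.sum_add_distrib]
        refine Finset.sum_congr rfl (fun x _ => ?_)
        rw [Nat.choose_succ_succ, Nat.cast_add]
        linear_combination (hpt x) * qw q m r₁ n x
      rw [qw, Finset.sum_range_succ']
      simp only [qw, Nat.choose_zero_succ, Nat.cast_zero, zero_mul, add_zero, Nat.succ_sub_succ]
      rw [ih k, ih (k+1)]
      have hmain : ∑ x ∈ Finset.range (n+1),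
            (((x+1).choose (k+1)) : ℂ) * (-r₂) ^ (x-k) *
              (q ^ (-(n:ℤ)) * (qw q m r₁ n x - (m * qint q n + r₁) * qw q m r₁ n (x+1)))
          = q ^ (-(n:ℤ)) *
              (∑ x ∈ Finset.range (n+1), (((x+1).choose (k+1)) : ℂ) * (-r₂) ^ (x-k) * qw q m r₁ n x)
            - q ^ (-(n:ℤ)) * (m * qint q n + r₁) *
              (∑ x ∈ Finset.range (n+1), (((x+1).choose (k+1)) : ℂ) * (-r₂) ^ (x-k) * qw q m r₁ n (x+1)) := by
        rw [Finset.mul_sum, Finset.mul_sum, ← Finset.sum_sub_distrib]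
        exact Finset.sum_congr rfl (fun x _ => by ring)
      rw [hmain, hS1, hS2]
      ring

theorem stmt11 (q m r r₁ r₂ : ℂ) (hq0 : q ≠ 0) (hq1 : q ≠ 1) (hr : r = r₁ + r₂)
    (n k : ℕ) (hkn : k ≤ n) :
    qw q m r n k =
      ∑ j ∈ Finset.Icc k n, (j.choose k : ℂ) * (-r₂) ^ (j - k) * qw q m r₁ n j := by
  rw [hr, key q m r₁ r₂ n k]
  refine (Finset.sum_subset ?_ ?_).symm
  · intro x hx
    simp only [Finset.mem_Icc, Finset.mem_range] at *
    omega
  · intro x hx hnx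
    simp only [Finset.mem_Icc, Finset.mem_range] at hx hnx
    have : x < k := by omega
    rw [Nat.choose_eq_zero_of_lt this]
    simp
end

section
/- For all n ≥ 0 and complex parameter r, the (q,r)-Dowling numbers satisfy the inverse relation D_{m,r,q}(n) = ∑_{j=0}^{n} (-1)^{n-j} C(n,j) D_{m,r+1,q}(j). -/
open Finset

noncomputable def qD (q m r : ℂ) (n : ℕ) : ℂ := ∑ k ∈ Finset.range (n + 1), qW q m r n k

lemma qW_zero (q m r : ℂ) : ∀ n k, n < k → qW q m r n k = 0 := by
  intro n
  induction n with
  | zero => intro k hk; match k, hk with | k + 1, _ => rfl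
  | succ n ih =>
    intro k hk
    match k, hk with
    | k + 1, hk =>
      have h1 : n < k := by omega
      have h2 : n < k + 1 := by omega
      simp [qW, ih k h1, ih (k + 1) h2]

lemma pascal_sum (f : ℕ → ℂ) (n : ℕ) :
    ∑ i ∈ range (n + 2), (((n + 1).choose i : ℕ) : ℂ) * f i
      = ∑ i ∈ range (n + 1), ((n.choose i : ℕ) : ℂ) * f i
        + ∑ i ∈ range (n + 1), ((n.choose i : ℕ) : ℂ) * f (i + 1) := by
  rw [Finset.sum_range_succ' (fun i => (((n + 1).choose i : ℕ) : ℂ) * f i) (n + 1)]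
  have h1 : ∀ i, (((n + 1).choose (i + 1) : ℕ) : ℂ) * f (i + 1)
      = ((n.choose i : ℕ) : ℂ) * f (i + 1) + ((n.choose (i + 1) : ℕ) : ℂ) * f (i + 1) := by
    intro i
    rw [Nat.choose_succ_succ]
    push_cast
    ring
  rw [Finset.sum_congr rfl (fun i _ => h1 i), Finset.sum_add_distrib]
  have h2 : ∑ i ∈ range (n + 1), ((n.choose (i + 1) : ℕ) : ℂ) * f (i + 1)
      + (((n + 1).choose 0 : ℕ) : ℂ) * f 0
      = ∑ i ∈ range (n + 1), ((n.choose i : ℕ) : ℂ) * f i := by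
    rw [Finset.sum_range_succ (fun i => ((n.choose (i + 1) : ℕ) : ℂ) * f (i + 1)) n]
    simp only [Nat.choose_succ_self, Nat.cast_zero, zero_mul, add_zero]
    rw [show (((n + 1).choose 0 : ℕ) : ℂ) = ((n.choose 0 : ℕ) : ℂ) by simp]
    rw [← Finset.sum_range_succ' (fun i => ((n.choose i : ℕ) : ℂ) * f i) n]
  rw [add_assoc, h2]
  ring

lemma forward_W (q m r : ℂ) : ∀ n k, qW q m (r + 1) n k
    = ∑ i ∈ range (n + 1), ((n.choose i : ℕ) : ℂ) * qW q m r i k := by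
  intro n
  induction n with
  | zero =>
    intro k
    match k with
    | 0 => simp [qW]
    | k + 1 => simp [qW]
  | succ n ih =>
    intro k
    match k with
    | 0 =>
      have : ∀ i, qW q m r (i + 1) 0 = (m * qint q 0 + r) * qW q m r i 0 := fun i => rfl
      rw [show qW q m (r + 1) (n + 1) 0
            = (m * qint q 0 + (r + 1)) * qW q m (r + 1) n 0 from rfl,
          ih 0, pascal_sum (fun i => qW q m r i 0) n]
      simp only [this]
      rw [Finset.mul_sum, ← Finset.sum_add_distrib]
      exact Finset.sum_congr rfl (fun i _ => by ring)
    | k + 1 =>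
      rw [show qW q m (r + 1) (n + 1) (k + 1)
            = q ^ k * qW q m (r + 1) n k
              + (m * qint q (k + 1) + (r + 1)) * qW q m (r + 1) n (k + 1) from rfl,
          ih k, ih (k + 1), pascal_sum (fun i => qW q m r i (k + 1)) n]
      simp only [show ∀ i, qW q m r (i + 1) (k + 1)
          = q ^ k * qW q m r i k + (m * qint q (k + 1) + r) * qW q m r i (k + 1)
          from fun i => rfl]
      rw [Finset.mul_sum, Finset.mul_sum, ← Finset.sum_add_distrib, ← Finset.sum_add_distrib]
      exact Finset.sum_congr rfl (fun i _ => by ring)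

lemma forward_D (q m r : ℂ) (n : ℕ) :
    qD q m (r + 1) n = ∑ i ∈ range (n + 1), ((n.choose i : ℕ) : ℂ) * qD q m r i := by
  unfold qD
  simp only [forward_W q m r n]
  rw [Finset.sum_comm]
  refine Finset.sum_congr rfl (fun i hi => ?_)
  rw [← Finset.mul_sum]
  congr 1
  have hi' : i + 1 ≤ n + 1 := Finset.mem_range.mp hi
  rw [← Finset.sum_subset (Finset.range_subset_range.mpr hi')
    (fun k _ hk => qW_zero q m r i k (by simpa using hk))]

lemma alt_sum (N : ℕ) :
    ∑ t ∈ range (N + 1), (-1 : ℂ) ^ (N - t) * ((N.choose t : ℕ) : ℂ)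
      = if N = 0 then 1 else 0 := by
  have key : ∀ t ∈ range (N + 1), (-1 : ℂ) ^ (N - t) * ((N.choose t : ℕ) : ℂ)
      = (-1 : ℂ) ^ N * ((-1 : ℂ) ^ t * ((N.choose t : ℕ) : ℂ)) := by
    intro t ht
    have htN : t ≤ N := by simpa [Nat.lt_succ_iff] using Finset.mem_range.mp ht
    have : (-1 : ℂ) ^ (N - t) * (-1 : ℂ) ^ t = (-1 : ℂ) ^ N := by
      rw [← pow_add, Nat.sub_add_cancel htN]
    have h2 : (-1 : ℂ) ^ (N - t) = (-1 : ℂ) ^ N * (-1 : ℂ) ^ t := by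
      have ht2 : (-1 : ℂ) ^ t * (-1 : ℂ) ^ t = 1 := by
        rw [← pow_add, ← two_mul, pow_mul]; norm_num
      calc (-1 : ℂ) ^ (N - t) = (-1 : ℂ) ^ (N - t) * ((-1 : ℂ) ^ t * (-1 : ℂ) ^ t) := by
            rw [ht2, mul_one]
        _ = (-1 : ℂ) ^ N * (-1 : ℂ) ^ t := by rw [← mul_assoc, this]
    rw [h2]; ring
  rw [Finset.sum_congr rfl key, ← Finset.mul_sum]
  have := Int.alternating_sum_range_choose (n := N)
  have hc : ∑ t ∈ range (N + 1), (-1 : ℂ) ^ t * ((N.choose t : ℕ) : ℂ)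
      = ((∑ t ∈ range (N + 1), (-1 : ℤ) ^ t * (N.choose t : ℤ) : ℤ) : ℂ) := by
    push_cast
    exact Finset.sum_congr rfl (fun t _ => by ring)
  rw [hc, this]
  by_cases hN : N = 0 <;> simp [hN]

lemma innerSumAux (n i : ℕ) (hi : i ≤ n) :
    ∑ j ∈ range (n + 1), (-1 : ℂ) ^ (n - j) * ((n.choose j : ℕ) : ℂ) * ((j.choose i : ℕ) : ℂ)
      = if i = n then 1 else 0 := by
  rw [Finset.range_eq_Ico, ← Finset.sum_Ico_consecutive _ (Nat.zero_le i) (by omega : i ≤ n + 1)]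
  have h0 : ∑ j ∈ Finset.Ico 0 i,
      (-1 : ℂ) ^ (n - j) * ((n.choose j : ℕ) : ℂ) * ((j.choose i : ℕ) : ℂ) = 0 := by
    refine Finset.sum_eq_zero fun j hj => ?_
    have : j < i := (Finset.mem_Ico.mp hj).2
    simp [Nat.choose_eq_zero_of_lt this]
  rw [h0, zero_add, Finset.sum_Ico_eq_sum_range]
  have hrange : n + 1 - i = (n - i) + 1 := by omega
  rw [hrange]
  have key : ∀ t ∈ range ((n - i) + 1),
      (-1 : ℂ) ^ (n - (i + t)) * ((n.choose (i + t) : ℕ) : ℂ) * (((i + t).choose i : ℕ) : ℂ)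
      = ((n.choose i : ℕ) : ℂ) * ((-1 : ℂ) ^ ((n - i) - t) * (((n - i).choose t : ℕ) : ℂ)) := by
    intro t ht
    have htn : t ≤ n - i := by simpa [Nat.lt_succ_iff] using Finset.mem_range.mp ht
    have h1 : i + t ≤ n := by omega
    have h2 : i ≤ i + t := by omega
    have hmul := Nat.choose_mul (n := n) h2
    rw [Nat.add_sub_cancel_left] at hmul
    have hsub : n - (i + t) = (n - i) - t := by omega
    rw [hsub]
    have : ((n.choose (i + t) : ℕ) : ℂ) * (((i + t).choose i : ℕ) : ℂ)
        = ((n.choose i : ℕ) : ℂ) * (((n - i).choose t : ℕ) : ℂ) := by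
      rw [← Nat.cast_mul, ← Nat.cast_mul, hmul]
    calc (-1 : ℂ) ^ ((n - i) - t) * ((n.choose (i + t) : ℕ) : ℂ) * (((i + t).choose i :ℕ) : ℂ)
        = (-1 : ℂ) ^ ((n - i) - t) * (((n.choose (i + t) : ℕ) : ℂ) * (((i + t).choose i :ℕ) : ℂ)) := by ring
      _ = (-1 : ℂ) ^ ((n - i) - t) * (((n.choose i : ℕ) : ℂ) * (((n - i).choose t : ℕ) : ℂ)) := by rw [this]
      _ = ((n.choose i : ℕ) : ℂ) * ((-1 : ℂ) ^ ((n - i) - t) * (((n - i).choose t : ℕ) : ℂ)) := by ring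
  rw [Finset.sum_congr rfl key, ← Finset.mul_sum, alt_sum (n - i)]
  by_cases h : i = n
  · simp [h]
  · have : n - i ≠ 0 := by omega
    simp [this, h]

lemma binom_inv (f : ℕ → ℂ) (n : ℕ) :
    ∑ j ∈ range (n + 1), (-1 : ℂ) ^ (n - j) * ((n.choose j : ℕ) : ℂ)
        * (∑ i ∈ range (j + 1), ((j.choose i : ℕ) : ℂ) * f i) = f n := by
  have hext : ∀ j ∈ range (n + 1),
      (-1 : ℂ) ^ (n - j) * ((n.choose j : ℕ) : ℂ)
          * (∑ i ∈ range (j + 1), ((j.choose i : ℕ) : ℂ) * f i)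
      = ∑ i ∈ range (n + 1),
          (-1 : ℂ) ^ (n - j) * ((n.choose j : ℕ) : ℂ) * (((j.choose i : ℕ) : ℂ) * f i) := by
    intro j hj
    have hj' : j + 1 ≤ n + 1 := Finset.mem_range.mp hj
    rw [Finset.mul_sum]
    exact Finset.sum_subset (Finset.range_subset_range.mpr hj')
      (fun i _ hi => by
        have : j < i := by simpa using hi
        simp [Nat.choose_eq_zero_of_lt this])
  rw [Finset.sum_congr rfl hext, Finset.sum_comm]
  have : ∀ i ∈ range (n + 1),
      ∑ j ∈ range (n + 1),
          (-1 : ℂ) ^ (n - j) * ((n.choose j : ℕ) : ℂ) * (((j.choose i : ℕ) : ℂ) * f i)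
      = (if i = n then 1 else 0) * f i := by
    intro i hi
    have hi' : i ≤ n := by simpa [Nat.lt_succ_iff] using Finset.mem_range.mp hi
    rw [← innerSumAux n i hi', Finset.sum_mul]
    exact Finset.sum_congr rfl (fun j _ => by ring)
  rw [Finset.sum_congr rfl this]
  rw [Finset.sum_eq_single n (fun b _ hb => by simp [hb]) (by simp)]
  simp

theorem stmt14 (q m r : ℂ) (hq0 : q ≠ 0) (hq1 : q ≠ 1) (n : ℕ) :
    qD q m r n =
      ∑ j ∈ Finset.range (n + 1), (-1) ^ (n - j) * (n.choose j : ℂ) * qD q m (r + 1) j := by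
  have := binom_inv (qD q m r) n
  rw [← this]
  refine Finset.sum_congr rfl (fun j _ => ?_)
  rw [forward_D q m r j]
end

section
/- For all non-negative integers p, j, n with n ≤ p + j, the convolution identity w_{m,r,q}(p+j, n) = q^{-pj} ∑_{k=0}^{n} w_{m,r,q}(p,k) w_{m̄,r̄,q}(j, n-k) holds, where m̄ = m q^p and r̄ = m[p]_q + r. -/
open Finset

lemma qw_succ_zero (q m r : ℂ) (n : ℕ) :
    qw q m r (n+1) 0 = q ^ (-(n:ℤ)) * (0 - (m * qint q n + r) * qw q m r n 0) := rfl

lemma qw_succ_succ (q m r : ℂ) (n k : ℕ) :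
    qw q m r (n+1) (k+1)
      = q ^ (-(n:ℤ)) * (qw q m r n k - (m * qint q n + r) * qw q m r n (k+1)) := rfl

lemma qw_succ (q m r : ℂ) (n i : ℕ) :
    qw q m r (n+1) i
      = q ^ (-(n:ℤ)) * ((if i = 0 then 0 else qw q m r n (i-1))
          - (m * qint q n + r) * qw q m r n i) := by
  cases i with
  | zero => simp [qw_succ_zero]
  | succ i => simp [qw_succ_succ]

lemma qint_add (q : ℂ) (hq1 : q ≠ 1) (p j : ℕ) :
    qint q p + q ^ p * qint q j = qint q (p + j) := by
  have h : q - 1 ≠ 0 := sub_ne_zero.mpr hq1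
  simp only [qint]
  field_simp
  ring

lemma qw_conv (q m r : ℂ) (hq0 : q ≠ 0) (hq1 : q ≠ 1) (p : ℕ) :
    ∀ j n, qw q m r (p + j) n =
      q ^ (-(p * j : ℤ)) * ∑ k ∈ Finset.range (n + 1),
        qw q m r p k * qw q (m * q ^ p) (m * qint q p + r) j (n - k) := by
  intro j
  induction j with
  | zero =>
    intro n
    rw [Finset.sum_eq_single n]
    · simp [qw]
    · intro k hk hne
      have h : n - k ≠ 0 := by simp only [Finset.mem_range] at hk; omega
      obtain ⟨s, hs⟩ := Nat.exists_eq_succ_of_ne_zero h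
      rw [hs]
      simp [qw]
    · simp
  | succ j ih =>
    intro n
    have hC : m * q ^ p * qint q j + (m * qint q p + r) = m * qint q (p + j) + r := by
      linear_combination m * qint_add q hq1 p j
    have he : q ^ (-((p:ℤ)+j)) * q ^ (-((p:ℤ)*j))
        = q ^ (-((p:ℤ)*(j+1))) * q ^ (-(j:ℤ)) := by
      rw [← zpow_add₀ hq0, ← zpow_add₀ hq0]
      congr 1
      ring
    cases n with
    | zero =>
      rw [show p + (j+1) = (p+j)+1 from rfl, qw_succ_zero, ih 0]
      rw [Finset.sum_range_one, Finset.sum_range_one, Nat.sub_self, qw_succ_zero, hC]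
      push_cast
      linear_combination (0 - (m * qint q (p+j) + r) *
        (qw q m r p 0 * qw q (m * q ^ p) (m * qint q p + r) j 0)) * he
    | succ s =>
      rw [show p + (j+1) = (p+j)+1 from rfl, qw_succ_succ, ih s, ih (s+1)]
      have hR : ∀ k ∈ Finset.range (s + 1 + 1),
          qw q m r p k * qw q (m * q ^ p) (m * qint q p + r) (j+1) (s + 1 - k)
          = q ^ (-(j:ℤ)) * (qw q m r p k *
              (if s + 1 - k = 0 then 0 else
                 qw q (m * q ^ p) (m * qint q p + r) j (s + 1 - k - 1)))
            - (q ^ (-(j:ℤ)) * (m * qint q (p+j) + r)) *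
              (qw q m r p k * qw q (m * q ^ p) (m * qint q p + r) j (s + 1 - k)) := by
        intro k _
        rw [qw_succ, hC]
        ring
      rw [Finset.sum_congr rfl hR, Finset.sum_sub_distrib, ← Finset.mul_sum, ← Finset.mul_sum]
      have hA : ∑ k ∈ Finset.range (s + 1 + 1), qw q m r p k *
            (if s + 1 - k = 0 then 0 else
              qw q (m * q ^ p) (m * qint q p + r) j (s + 1 - k - 1))
          = ∑ k ∈ Finset.range (s + 1), qw q m r p k *
              qw q (m * q ^ p) (m * qint q p + r) j (s - k) := by
        rw [Finset.sum_range_succ]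
        simp only [Nat.sub_self, if_pos rfl, mul_zero, add_zero, if_true, reduceIte]
        refine Finset.sum_congr rfl fun k hk => ?_
        simp only [Finset.mem_range] at hk
        have h1 : s + 1 - k ≠ 0 := by omega
        have h2 : s + 1 - k - 1 = s - k := by omega
        rw [if_neg h1, h2]
      rw [hA]
      set S0 := ∑ k ∈ Finset.range (s + 1), qw q m r p k *
          qw q (m * q ^ p) (m * qint q p + r) j (s - k)
      set S1 := ∑ k ∈ Finset.range (s + 1 + 1), qw q m r p k *
          qw q (m * q ^ p) (m * qint q p + r) j (s + 1 - k)
      push_cast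
      linear_combination (S0 - (m * qint q (p+j) + r) * S1) * he

theorem stmt15 (q m r : ℂ) (hq0 : q ≠ 0) (hq1 : q ≠ 1) (p j n : ℕ) (hn : n ≤ p + j) :
    qw q m r (p + j) n =
      q ^ (-(p * j : ℤ)) * ∑ k ∈ Finset.range (n + 1),
        qw q m r p k * qw q (m * q ^ p) (m * qint q p + r) j (n - k) := by
  exact qw_conv q m r hq0 hq1 p j n
end

section
/- For all non-negative integers n, j, p, the convolution identity W_{m,r,q}(n+1, j+p+1) = ∑_{k=0}^{n} q^{p + pj + j} W_{m,r,q}(k,p) W_{m̂,r̂,q}(n-k, j) holds, where m̂ = m q^{p+1} and r̂ = m[p+1]_q + r. -/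
open Finset

lemma qW_succ_succ (q m r : ℂ) (n k : ℕ) :
    qW q m r (n+1) (k+1) = q ^ k * qW q m r n k + (m * qint q (k + 1) + r) * qW q m r n (k + 1) := rfl

lemma qW_succ_zero (q m r : ℂ) (n : ℕ) :
    qW q m r (n+1) 0 = (m * qint q 0 + r) * qW q m r n 0 := rfl

lemma qW_zero_succ (q m r : ℂ) (k : ℕ) : qW q m r 0 (k+1) = 0 := rfl

lemma qW_zero_zero (q m r : ℂ) : qW q m r 0 0 = 1 := rfl

theorem stmt17 (q m r : ℂ) (hq0 : q ≠ 0) (hq1 : q ≠ 1) (n j p : ℕ) :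
    qW q m r (n + 1) (j + p + 1) =
      ∑ k ∈ Finset.range (n + 1),
        q ^ (p + p * j + j) * qW q m r k p *
          qW q (m * q ^ (p + 1)) (m * qint q (p + 1) + r) (n - k) j := by
  induction n generalizing j with
  | zero =>
    rw [Finset.sum_range_one]
    cases j with
    | zero =>
      cases p with
      | zero => simp [qW, qint]
      | succ p => simp [qW]
    | succ j =>
      rw [qW_succ_succ, qW_zero_succ]
      have h : (j:ℕ) + 1 + p = (j + p) + 1 := by omega
      rw [h, qW_zero_succ, qW_zero_succ]
      ring
  | succ n ih =>
    rw [Finset.sum_range_succ]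
    cases j with
    | zero =>
      have h1 : ∀ k ∈ Finset.range (n+1),
          q ^ (p + p*0 + 0) * qW q m r k p *
            qW q (m*q^(p+1)) (m*qint q (p+1)+r) (n+1-k) 0
          = (m*qint q (p+1)+r) * (q ^ (p + p*0 + 0) * qW q m r k p *
            qW q (m*q^(p+1)) (m*qint q (p+1)+r) (n-k) 0) := by
        intro k hk
        have hk' : n + 1 - k = (n - k) + 1 := by
          simp only [Finset.mem_range] at hk; omega
        rw [hk', qW_succ_zero]
        simp [qint]
        ring
      rw [Finset.sum_congr rfl h1, ← Finset.mul_sum, ← ih 0]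
      simp only [Nat.zero_add, Nat.sub_self]
      rw [qW_succ_succ, qW_zero_zero]
      ring
    | succ j =>
      have hq : m * q^(p+1) * qint q (j+1) + (m * qint q (p+1) + r)
          = m * qint q (j+p+1+1) + r := by
        have h : q - 1 ≠ 0 := sub_ne_zero.mpr hq1
        simp only [qint]
        field_simp
        ring
      have h1 : ∀ k ∈ Finset.range (n+1),
          q ^ (p + p*(j+1) + (j+1)) * qW q m r k p *
            qW q (m*q^(p+1)) (m*qint q (p+1)+r) (n+1-k) (j+1)
          = q^(j+p+1) * (q ^ (p + p*j + j) * qW q m r k p *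
              qW q (m*q^(p+1)) (m*qint q (p+1)+r) (n-k) j)
            + (m*qint q (j+p+1+1)+r) * (q ^ (p + p*(j+1) + (j+1)) * qW q m r k p *
              qW q (m*q^(p+1)) (m*qint q (p+1)+r) (n-k) (j+1)) := by
        intro k hk
        have hk' : n + 1 - k = (n - k) + 1 := by
          simp only [Finset.mem_range] at hk; omega
        rw [hk', qW_succ_succ, ← hq]
        ring
      rw [Finset.sum_congr rfl h1, Finset.sum_add_distrib, ← Finset.mul_sum,
        ← Finset.mul_sum, ← ih j, ← ih (j+1)]
      have h2 : (j:ℕ) + 1 + p + 1 = (j + p + 1) + 1 := by omega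
      rw [h2, qW_succ_succ]
      simp only [Nat.sub_self, qW_zero_succ]
      ring
end
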